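/- Let $\Gamma$ be a finite connected graph on a nonempty vertex set $V$ of size $n$, whose edges consist of: $\ell_2$ vertices carrying an $a$-loop, $k_2$ isolated $a$-edges (unordered pairs of distinct vertices), $\ell_3$ vertices carrying a $b$-loop, $k_3$ isolated $b$-edges, and $m$ $b$-triangles (3-element subsets), such that every vertex is incident to exactly one $a$-item (loop or isolated $a$-edge) and exactly one $b$-item (loop, isolated $b$-edge, or $b$-triangle). Then $n = 2k_2 + \ell_2 = 2k_3 + \ell_3 + 3m$, the integer $m - \ell_2 - \ell_3$ is even, and $m - \ell_2 - \ell_3 \ge -2$. -/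
import Mathlib


/-- A `τ₃`-structure on a set, encoded as a partial function `f : α → Option α`:
`f` is injective on its domain, every element is in the domain or is the head of a
directed edge, and each directed edge is a loop, an isolated directed edge, or part of
a directed 3-cycle. -/
def IsTau3 {α : Type*} (f : α → Option α) : Prop :=
  (∀ x y z, f x = some z → f y = some z → x = y) ∧
  (∀ x, (f x).isSome = true ∨ ∃ y, f y = some x) ∧
  (∀ x y, f x = some y → x ≠ y →
    (f y = none ∧ ∀ z, f z ≠ some x) ∨
    (∃ z, f y = some z ∧ f z = some x ∧ y ≠ z ∧ z ≠ x))

/-- `x` lies on an isolated (directed) `b`-edge of the `τ₃`-structure `f`. -/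
def InPair {α : Type*} (f : α → Option α) (x : α) : Prop :=
  (∃ y, x ≠ y ∧ f x = some y ∧ f y = none) ∨
  (∃ y, y ≠ x ∧ f y = some x ∧ f x = none)

/-- `x` lies on a `b`-triangle (oriented 3-cycle) of the `τ₃`-structure `f`. -/
def InTriangle {α : Type*} (f : α → Option α) (x : α) : Prop :=
  ∃ y z, x ≠ y ∧ y ≠ z ∧ z ≠ x ∧ f x = some y ∧ f y = some z ∧ f z = some x

set_option linter.unusedSectionVars false

namespace Stmt7Aux

open SimpleGraph

variable {V : Type*}

lemma card_le_edge (V : Type*) [Fintype V] (G : SimpleGraph V) (h : G.Connected) :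
    Fintype.card V ≤ Nat.card G.edgeSet + 1 := by
  classical
  obtain ⟨r⟩ := h.nonempty
  have hex : ∀ v : V, v ≠ r → ∃ u, G.Adj v u ∧ G.dist r u + 1 ≤ G.dist r v := by
    intro v hv
    have hd : G.dist r v ≠ 0 := (h.dist_eq_zero_iff.ne.mpr (Ne.symm hv))
    obtain ⟨p, hp⟩ := SimpleGraph.exists_walk_of_dist_ne_zero hd
    obtain ⟨u, hadj, q, hq⟩ := SimpleGraph.Walk.exists_eq_cons_of_ne (Ne.symm hv).symm p.reverse
    refine ⟨u, hadj, ?_⟩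
    have hlen : q.length + 1 = G.dist r v := by
      have := congrArg SimpleGraph.Walk.length hq
      simpa [hp] using this.symm
    have h2 : G.dist r u ≤ q.length := by
      simpa using SimpleGraph.dist_le q.reverse
    omega
  let f : {v : V // v ≠ r} → G.edgeSet := fun v =>
    ⟨s(v.1, Classical.choose (hex v.1 v.2)), (Classical.choose_spec (hex v.1 v.2)).1⟩
  have hf : Function.Injective f := by
    intro v w hvw
    have hv := Classical.choose_spec (hex v.1 v.2)
    have hw := Classical.choose_spec (hex w.1 w.2)
    have hs : s(v.1, Classical.choose (hex v.1 v.2)) = s(w.1, Classical.choose (hex w.1 w.2)) :=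
      congrArg Subtype.val hvw
    rw [Sym2.eq_iff] at hs
    rcases hs with ⟨h1, h2⟩ | ⟨h1, h2⟩
    · exact Subtype.ext h1
    · exfalso
      rw [h2] at hv
      rw [← h1] at hw
      omega
  calc Fintype.card V = Fintype.card {v : V // v ≠ r} + 1 := by
        rw [Fintype.card_subtype_compl (p := fun v => v = r)]
        have h1 : Fintype.card {v : V // v = r} = 1 := Fintype.card_subtype_eq r
        have : 0 < Fintype.card V := @Fintype.card_pos _ _ ⟨r⟩
        omega
    _ ≤ Nat.card G.edgeSet + 1 := by
        have := Nat.card_le_card_of_injective f hf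
        simpa [Nat.card_eq_fintype_card] using this

noncomputable def nxt (b : V → Option V) (x : V) : V := (b x).getD x

lemma nxt_eq {b : V → Option V} {x y : V} (h : b x = some y) : nxt b x = y := by
  simp [nxt, h]

lemma tri {b : V → Option V} {x : V} (h : InTriangle b x) :
    b x = some (nxt b x) ∧ b (nxt b x) = some (nxt b (nxt b x)) ∧
    b (nxt b (nxt b x)) = some x ∧
    x ≠ nxt b x ∧ nxt b x ≠ nxt b (nxt b x) ∧ nxt b (nxt b x) ≠ x := by
  obtain ⟨y, z, hxy, hyz, hzx, h1, h2, h3⟩ := h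
  have e1 : nxt b x = y := nxt_eq h1
  have e2 : nxt b y = z := nxt_eq h2
  rw [e1, e2]
  exact ⟨h1, h2, h3, hxy, hyz, hzx⟩

lemma tri_next {b : V → Option V} {x : V} (h : InTriangle b x) :
    InTriangle b (nxt b x) := by
  obtain ⟨h1, h2, h3, d1, d2, d3⟩ := tri h
  exact ⟨nxt b (nxt b x), x, d2, d3, d1, h2, h3, h1⟩

variable [LinearOrder V]

def Drop (b : V → Option V) (x : V) : Prop :=
  InTriangle b x ∧ nxt b x < x ∧ nxt b (nxt b x) < x

noncomputable def M (b : V → Option V) (x : V) : V :=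
  max x (max (nxt b x) (nxt b (nxt b x)))

lemma M_mem {b : V → Option V} {x : V} (h : InTriangle b x) :
    Drop b (M b x) ∧ (x = M b x ∨ x = nxt b (M b x) ∨ x = nxt b (nxt b (M b x))) := by
  obtain ⟨h1, h2, h3, d1, d2, d3⟩ := tri h
  set y := nxt b x with hy
  set z := nxt b y with hz
  have ezx : nxt b z = x := nxt_eq h3
  have hM : M b x = x ∨ M b x = y ∨ M b x = z := by
    unfold M
    rcases max_cases x (max y z) with ⟨e, _⟩ | ⟨e, _⟩
    · left; rw [← hy, ← hz, e]
    · rcases max_cases y z with ⟨e2, _⟩ | ⟨e2, _⟩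
      · right; left; rw [← hy, ← hz, e, e2]
      · right; right; rw [← hy, ← hz, e, e2]
  have hle1 : x ≤ M b x := le_max_left _ _
  have hle2 : y ≤ M b x := le_trans (le_max_left _ _) (le_max_right _ _)
  have hle3 : z ≤ M b x := le_trans (le_max_right _ _) (le_max_right _ _)
  rcases hM with e | e | e
  · rw [e] at hle2 hle3 ⊢
    refine ⟨⟨h, lt_of_le_of_ne hle2 (fun c => d1 c.symm), lt_of_le_of_ne hle3 d3⟩, Or.inl rfl⟩
  · rw [e] at hle1 hle3 ⊢
    have ht : InTriangle b y := tri_next h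
    refine ⟨⟨ht, ?_, ?_⟩, ?_⟩
    · rw [← hz]; exact lt_of_le_of_ne hle3 (fun c => d2 c.symm)
    · rw [← hz, ezx]; exact lt_of_le_of_ne hle1 d1
    · right; right; rw [← hz, ezx]
  · rw [e] at hle1 hle2 ⊢
    have ht : InTriangle b z := tri_next (tri_next h)
    refine ⟨⟨ht, ?_, ?_⟩, ?_⟩
    · rw [ezx]; exact lt_of_le_of_ne hle1 (fun c => d3 c.symm)
    · rw [ezx, ← hy]; exact lt_of_le_of_ne hle2 d2
    · right; left; rw [ezx]

lemma card_tri_le {b : V → Option V} [Finite V] :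
    Nat.card {x : V // InTriangle b x} ≤ 3 * Nat.card {x : V // Drop b x} := by
  classical
  have key : ∀ (x : V) (hx : InTriangle b x),
      x = (fun (w : V) (k : Fin 3) => if k = 0 then w else if k = 1 then nxt b w
            else nxt b (nxt b w)) (M b x)
          (if x = M b x then 0 else if x = nxt b (M b x) then 1 else 2) := by
    intro x hx
    obtain ⟨-, hmem⟩ := M_mem hx
    by_cases e0 : x = M b x
    · rw [if_pos e0]; simpa using e0
    · by_cases e1 : x = nxt b (M b x)
      · rw [if_neg e0, if_pos e1]; simpa using e1
      · have e2 : x = nxt b (nxt b (M b x)) := by tauto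
        rw [if_neg e0, if_neg e1]; simpa using e2
  let f : {x : V // InTriangle b x} → {x : V // Drop b x} × Fin 3 := fun s =>
    (⟨M b s.1, (M_mem s.2).1⟩,
      if s.1 = M b s.1 then 0 else if s.1 = nxt b (M b s.1) then 1 else 2)
  have hf : Function.Injective f := by
    intro s t hst
    have h1 : M b s.1 = M b t.1 := congrArg (fun p => p.1.1) hst
    have h2 : (f s).2 = (f t).2 := congrArg Prod.snd hst
    apply Subtype.ext
    rw [key s.1 s.2, key t.1 t.2]
    simp only [f] at h2
    rw [h2, h1]
  calc Nat.card {x : V // InTriangle b x}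
      ≤ Nat.card ({x : V // Drop b x} × Fin 3) := Nat.card_le_card_of_injective f hf
    _ = 3 * Nat.card {x : V // Drop b x} := by
        rw [Nat.card_prod]; simp [mul_comm]

/-- source of an isolated pair -/
def PSrc (b : V → Option V) (x : V) : Prop := ∃ y, x ≠ y ∧ b x = some y ∧ b y = none

lemma card_pairSource [Finite V] {b : V → Option V}
    (hb1 : ∀ x y z, b x = some z → b y = some z → x = y) :
    2 * Nat.card {x : V // PSrc b x} ≤ Nat.card {x : V // InPair b x} := by
  classical
  let g : {x : V // PSrc b x} ⊕ {x : V // PSrc b x} → {x : V // InPair b x} := fun s =>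
    Sum.elim (fun s => ⟨s.1, Or.inl s.2⟩)
      (fun s => ⟨nxt b s.1, by
        obtain ⟨y, hne, hby, hyn⟩ := s.2
        rw [nxt_eq hby]
        exact Or.inr ⟨s.1, hne, hby, hyn⟩⟩) s
  have hg : Function.Injective g := by
    rintro (s | s) (t | t) h <;> apply_fun Subtype.val at h <;> simp only [g, Sum.elim_inl,
      Sum.elim_inr] at h
    · exact congrArg Sum.inl (Subtype.ext h)
    · exfalso
      obtain ⟨y, hne, hby, hyn⟩ := t.2
      obtain ⟨y', hne', hby', hyn'⟩ := s.2
      rw [nxt_eq hby] at h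
      rw [h] at hby'
      rw [hby'] at hyn
      exact Option.some_ne_none _ hyn
    · exfalso
      obtain ⟨y, hne, hby, hyn⟩ := s.2
      obtain ⟨y', hne', hby', hyn'⟩ := t.2
      rw [nxt_eq hby] at h
      rw [← h] at hby'
      rw [hby'] at hyn
      exact Option.some_ne_none _ hyn
    · refine congrArg Sum.inr (Subtype.ext ?_)
      obtain ⟨y, hne, hby, hyn⟩ := s.2
      obtain ⟨y', hne', hby', hyn'⟩ := t.2
      rw [nxt_eq hby, nxt_eq hby'] at h
      subst h
      exact hb1 _ _ _ hby hby'
  have := Nat.card_le_card_of_injective g hg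
  simpa [Nat.card_sum, two_mul] using this

lemma card_aSource [Finite V] (α : Equiv.Perm V)
    (hαα : ∀ x : V, α (α x) = x) :
    2 * Nat.card {x : V // α x ≠ x ∧ x < α x} ≤ Nat.card {x : V // α x ≠ x} := by
  classical
  let g : {x : V // α x ≠ x ∧ x < α x} ⊕ {x : V // α x ≠ x ∧ x < α x} →
      {x : V // α x ≠ x} := fun s =>
    Sum.elim (fun s => ⟨s.1, s.2.1⟩)
      (fun s => ⟨α s.1, by rw [hαα]; exact fun c => s.2.1 c.symm⟩) s
  have hg : Function.Injective g := by
    rintro (s | s) (t | t) h <;> apply_fun Subtype.val at h <;> simp only [g, Sum.elim_inl,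
      Sum.elim_inr] at h
    · exact congrArg Sum.inl (Subtype.ext h)
    · exfalso
      have h2 : α s.1 = t.1 := by rw [h, hαα]
      have c1 : s.1 < t.1 := by have := s.2.2; rwa [h2] at this
      have c2 : t.1 < s.1 := by have := t.2.2; rwa [← h] at this
      exact absurd (c1.trans c2) (lt_irrefl _)
    · exfalso
      have h2 : α t.1 = s.1 := by rw [← h, hαα]
      have c1 : s.1 < t.1 := by have := s.2.2; rwa [h] at this
      have c2 : t.1 < s.1 := by have := t.2.2; rwa [h2] at this
      exact absurd (c1.trans c2) (lt_irrefl _)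
    · exact congrArg Sum.inr (Subtype.ext (α.injective h))
  have := Nat.card_le_card_of_injective g hg
  simpa [Nat.card_sum, two_mul] using this

lemma cover {b : V → Option V} (hb : IsTau3 b) (x : V) :
    b x = some x ∨ InPair b x ∨ InTriangle b x := by
  rcases hb.2.1 x with h | ⟨y, hy⟩
  · obtain ⟨y, hy⟩ := Option.isSome_iff_exists.mp h
    by_cases hxy : x = y
    · left; rw [hy, hxy]
    · rcases hb.2.2 x y hy hxy with ⟨h1, _⟩ | ⟨z, h1, h2, h3, h4⟩
      · right; left; exact Or.inl ⟨y, hxy, hy, h1⟩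
      · right; right; exact ⟨y, z, hxy, h3, h4, hy, h1, h2⟩
  · by_cases hyx : y = x
    · left; rw [← hy, hyx]
    · rcases hb.2.2 y x hy (fun c => hyx c) with ⟨h1, _⟩ | ⟨z, h1, h2, h3, h4⟩
      · right; left; exact Or.inr ⟨y, hyx, hy, h1⟩
      · right; right
        exact ⟨z, y, h3, h4, hyx, h1, h2, hy⟩

lemma loop_not_pair {b : V → Option V} {x : V} (hx : b x = some x) : ¬ InPair b x := by
  rintro (⟨y, hne, h1, h2⟩ | ⟨y, hne, h1, h2⟩)
  · rw [hx] at h1; exact hne (Option.some.inj h1)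
  · rw [hx] at h2; exact Option.some_ne_none _ h2

lemma loop_not_tri {b : V → Option V} {x : V} (hx : b x = some x) : ¬ InTriangle b x := by
  rintro ⟨y, z, hne, _, _, h1, _, _⟩
  rw [hx] at h1; exact hne (Option.some.inj h1)

lemma pair_not_tri {b : V → Option V} {x : V} (hx : InPair b x) : ¬ InTriangle b x := by
  rintro ⟨y', z', d1, d2, d3, t1, t2, t3⟩
  rcases hx with ⟨y, hne, h1, h2⟩ | ⟨y, hne, h1, h2⟩
  · rw [t1] at h1
    rw [Option.some.inj h1] at t2
    rw [t2] at h2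
    exact Option.some_ne_none _ h2
  · rw [t1] at h2; exact Option.some_ne_none _ h2

lemma card_kept [Finite V] {b : V → Option V} (hb : IsTau3 b) :
    Nat.card {x : V // (∃ y, b x = some y ∧ x ≠ y) ∧ ¬ Drop b x} ≤
      Nat.card {x : V // PSrc b x} + Nat.card {x : V // InTriangle b x ∧ ¬ Drop b x} := by
  classical
  have key : ∀ x : V, (∃ y, b x = some y ∧ x ≠ y) → ¬ PSrc b x → InTriangle b x := by
    rintro x ⟨y, hy, hne⟩ hnp
    rcases hb.2.2 x y hy hne with ⟨h1, _⟩ | ⟨z, h1, h2, h3, h4⟩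
    · exact absurd ⟨y, hne, hy, h1⟩ hnp
    · exact ⟨y, z, hne, h3, h4, hy, h1, h2⟩
  let g : {x : V // (∃ y, b x = some y ∧ x ≠ y) ∧ ¬ Drop b x} →
      {x : V // PSrc b x} ⊕ {x : V // InTriangle b x ∧ ¬ Drop b x} := fun s =>
    if h : PSrc b s.1 then Sum.inl ⟨s.1, h⟩ else Sum.inr ⟨s.1, key s.1 s.2.1 h, s.2.2⟩
  have hg : Function.Injective g := by
    intro s t h
    by_cases hs : PSrc b s.1 <;> by_cases ht : PSrc b t.1
    · simp only [g, dif_pos hs, dif_pos ht, Sum.inl.injEq, Subtype.mk.injEq] at h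
      exact Subtype.ext h
    · simp only [g, dif_pos hs, dif_neg ht] at h
      exact absurd h (by simp)
    · simp only [g, dif_neg hs, dif_pos ht] at h
      exact absurd h (by simp)
    · simp only [g, dif_neg hs, dif_neg ht, Sum.inr.injEq, Subtype.mk.injEq] at h
      exact Subtype.ext h
  have := Nat.card_le_card_of_injective g hg
  simpa [Nat.card_sum] using this

lemma natcard_filter {p : V → Prop} [Fintype V] [DecidablePred p] :
    Nat.card {x : V // p x} = (Finset.univ.filter p).card := by
  rw [Nat.card_eq_fintype_card, Fintype.card_subtype]

end Stmt7Aux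
open Stmt7Aux

/-- Combinatorial type of a connected proper `PSL₂(ℤ)`-cyclically reduced graph: the
`a`-edges form an involution `α` (`ℓ₂` loops, `k₂` isolated `a`-edges), the `b`-edges a
`τ₃`-structure `b` (`ℓ₃` loops, `k₃` isolated `b`-edges, `m` `b`-triangles), the graph
is connected, and every vertex carries exactly one `a`-item and one `b`-item.  Then
`n = 2k₂+ℓ₂ = 2k₃+ℓ₃+3m`, `m-ℓ₂-ℓ₃` is even and `m-ℓ₂-ℓ₃ ≥ -2`. -/
theorem stmt7 (V : Type*) [Fintype V] [Nonempty V]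
    (α : Equiv.Perm V) (hα : α ^ 2 = 1)
    (b : V → Option V) (hb : IsTau3 b)
    (n k2 k3 ℓ2 ℓ3 m : ℕ)
    (hn : n = Nat.card V)
    (hℓ2 : ℓ2 = Nat.card {x : V // α x = x})
    (hk2 : 2 * k2 = Nat.card {x : V // α x ≠ x})
    (hℓ3 : ℓ3 = Nat.card {x : V // b x = some x})
    (hk3 : 2 * k3 = Nat.card {x : V // InPair b x})
    (hm : 3 * m = Nat.card {x : V // InTriangle b x})
    (hconn : ∀ x y : V,
      Relation.ReflTransGen (fun u v => α u = v ∨ b u = some v ∨ b v = some u) x y) :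
    n = 2 * k2 + ℓ2 ∧ n = 2 * k3 + ℓ3 + 3 * m ∧
      Even ((m : ℤ) - ℓ2 - ℓ3) ∧ (-2 : ℤ) ≤ (m : ℤ) - ℓ2 - ℓ3 := by

  classical
  letI : LinearOrder V := LinearOrder.lift' (Fintype.equivFin V) (Fintype.equivFin V).injective
  have hαα : ∀ x : V, α (α x) = x := by
    intro x
    have := congrArg (fun e : Equiv.Perm V => e x) hα
    simpa [sq, Equiv.Perm.mul_apply] using this
  have hnn : n = Fintype.card V := by rw [hn, Nat.card_eq_fintype_card]
  -- first partition equality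
  have eA : n = 2 * k2 + ℓ2 := by
    have h1 : (Finset.univ.filter (fun x : V => α x = x)).card +
        (Finset.univ.filter (fun x : V => α x ≠ x)).card = Fintype.card V :=
      Finset.card_filter_add_card_filter_not (s := Finset.univ)
        (p := fun x : V => α x = x)
    have c1 : ℓ2 = (Finset.univ.filter (fun x : V => α x = x)).card :=
      hℓ2.trans (natcard_filter)
    have c2 : 2 * k2 = (Finset.univ.filter (fun x : V => α x ≠ x)).card :=
      hk2.trans (natcard_filter)
    omega
  -- second partition equality
  have eB : n = 2 * k3 + ℓ3 + 3 * m := by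
    have h1 : (Finset.univ.filter (fun x : V => b x = some x)).card +
        (Finset.univ.filter (fun x : V => ¬ b x = some x)).card = Fintype.card V :=
      Finset.card_filter_add_card_filter_not (s := Finset.univ)
        (p := fun x : V => b x = some x)
    have hu : Finset.univ.filter (fun x : V => ¬ b x = some x) =
        Finset.univ.filter (InPair b) ∪ Finset.univ.filter (InTriangle b) := by
      ext x
      simp only [Finset.mem_filter, Finset.mem_union, Finset.mem_univ, true_and]
      constructor
      · intro hx
        rcases cover hb x with h | h | h
        · exact absurd h hx
        · exact Or.inl h
        · exact Or.inr h
      · rintro (h | h) c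
        · exact loop_not_pair c h
        · exact loop_not_tri c h
    have hdisj : Disjoint (Finset.univ.filter (InPair b))
        (Finset.univ.filter (InTriangle b)) := by
      rw [Finset.disjoint_left]
      intro x hx hx'
      simp only [Finset.mem_filter, Finset.mem_univ, true_and] at hx hx'
      exact pair_not_tri hx hx'
    have h3 : (Finset.univ.filter (fun x : V => ¬ b x = some x)).card =
        (Finset.univ.filter (InPair b)).card + (Finset.univ.filter (InTriangle b)).card := by
      rw [hu, Finset.card_union_of_disjoint hdisj]
    have c1 : ℓ3 = (Finset.univ.filter (fun x : V => b x = some x)).card :=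
      hℓ3.trans (natcard_filter)
    have c2 : 2 * k3 = (Finset.univ.filter (InPair b)).card := hk3.trans (natcard_filter)
    have c3 : 3 * m = (Finset.univ.filter (InTriangle b)).card := hm.trans (natcard_filter)
    omega
  -- the graph
  let G : SimpleGraph V :=
    SimpleGraph.fromRel (fun u v : V => α u = v ∨ (b u = some v ∧ ¬ Drop b u))
  have hbstep : ∀ u v : V, b u = some v → G.Reachable u v := by
    intro u v h
    by_cases huv : u = v
    · subst huv; exact SimpleGraph.Reachable.refl u
    by_cases hd : Drop b u
    · obtain ⟨h1, h2, h3, d1, d2, d3⟩ := tri hd.1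
      have hv : nxt b u = v := nxt_eq h
      rw [hv] at h1 h2 h3 d1 d2 d3
      obtain ⟨-, hl1, hl2⟩ := hd
      rw [hv] at hl1 hl2
      have hnv : ¬ Drop b v := by
        rintro ⟨-, -, c2⟩
        rw [nxt_eq h3] at c2
        exact absurd (c2.trans hl1) (lt_irrefl _)
      have hnz : ¬ Drop b (nxt b v) := by
        rintro ⟨-, c1, -⟩
        rw [nxt_eq h3] at c1
        exact absurd (c1.trans hl2) (lt_irrefl _)
      have a1 : G.Adj v (nxt b v) := ⟨d2, Or.inl (Or.inr ⟨h2, hnv⟩)⟩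
      have a2 : G.Adj (nxt b v) u := ⟨d3, Or.inl (Or.inr ⟨h3, hnz⟩)⟩
      exact (a2.reachable.symm).trans (a1.reachable.symm)
    · exact SimpleGraph.Adj.reachable ⟨huv, Or.inl (Or.inr ⟨h, hd⟩)⟩
  have hstep : ∀ u v : V, (α u = v ∨ b u = some v ∨ b v = some u) → G.Reachable u v := by
    rintro u v (h | h | h)
    · by_cases huv : u = v
      · subst huv; exact SimpleGraph.Reachable.refl u
      · exact SimpleGraph.Adj.reachable ⟨huv, Or.inl (Or.inl h)⟩
    · exact hbstep u v h
    · exact (hbstep v u h).symm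
  have hG : G.Connected := by
    rw [SimpleGraph.connected_iff]
    refine ⟨fun x y => ?_, ‹Nonempty V›⟩
    have h := hconn x y
    induction h with
    | refl => exact SimpleGraph.Reachable.refl x
    | tail h1 h2 ih => exact ih.trans (hstep _ _ h2)
  have t1 : Fintype.card V ≤ Nat.card G.edgeSet + 1 := card_le_edge V G hG
  -- tokens
  let tok : ({x : V // α x ≠ x ∧ x < α x} ⊕
      {x : V // (∃ y, b x = some y ∧ x ≠ y) ∧ ¬ Drop b x}) → G.edgeSet := fun s =>
    Sum.elim
      (fun s => ⟨s(s.1, α s.1), (G.mem_edgeSet).mpr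
        ⟨fun c => s.2.1 c.symm, Or.inl (Or.inl rfl)⟩⟩)
      (fun s => ⟨s(s.1, nxt b s.1), by
        obtain ⟨⟨y, hy, hne⟩, hnd⟩ := s.2
        rw [nxt_eq hy]
        exact (G.mem_edgeSet).mpr ⟨hne, Or.inl (Or.inr ⟨hy, hnd⟩)⟩⟩) s
  have hsurj : Function.Surjective tok := by
    rintro ⟨e, he⟩
    revert he
    refine Sym2.ind (fun u v => ?_) e
    intro he
    rw [SimpleGraph.mem_edgeSet] at he
    obtain ⟨hne, hr⟩ := he
    rcases hr with (h | ⟨hb1, hnd⟩) | (h | ⟨hb1, hnd⟩)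
    · subst h
      by_cases hlt : u < α u
      · exact ⟨Sum.inl ⟨u, fun c => hne c.symm, hlt⟩, Subtype.ext rfl⟩
      · have hlt' : α u < u := lt_of_le_of_ne (not_lt.mp hlt) (fun c => hne c.symm)
        refine ⟨Sum.inl ⟨α u, ?_, ?_⟩, ?_⟩
        · rw [hαα]; exact hne
        · rw [hαα]; exact hlt'
        · apply Subtype.ext
          show s(α u, α (α u)) = s(u, α u)
          rw [hαα]
          exact Sym2.eq_swap
    · exact ⟨Sum.inr ⟨u, ⟨v, hb1, hne⟩, hnd⟩, Subtype.ext (by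
        show s(u, nxt b u) = s(u, v)
        rw [nxt_eq hb1])⟩
    · subst h
      by_cases hlt : v < α v
      · refine ⟨Sum.inl ⟨v, fun c => hne.symm c.symm, hlt⟩, Subtype.ext ?_⟩
        show s(v, α v) = s(α v, v)
        exact Sym2.eq_swap
      · have hlt' : α v < v := lt_of_le_of_ne (not_lt.mp hlt) hne
        refine ⟨Sum.inl ⟨α v, ?_, ?_⟩, ?_⟩
        · rw [hαα]; exact fun c => hne c.symm
        · rw [hαα]; exact hlt'
        · apply Subtype.ext
          show s(α v, α (α v)) = s(α v, v)
          rw [hαα]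
    · refine ⟨Sum.inr ⟨v, ⟨u, hb1, hne.symm⟩, hnd⟩, Subtype.ext ?_⟩
      show s(v, nxt b v) = s(u, v)
      rw [nxt_eq hb1]
      exact Sym2.eq_swap
  have t2 := Nat.card_le_card_of_surjective tok hsurj
  rw [Nat.card_sum] at t2
  -- count tokens
  have t3 := card_aSource α hαα
  have t4 := card_pairSource (b := b) hb.1
  have t5 := card_kept (b := b) hb
  -- triangle counting
  have t6 : Nat.card {x : V // InTriangle b x ∧ ¬ Drop b x} ≤ 2 * m := by
    have f4 := Finset.card_filter_add_card_filter_not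
      (s := Finset.univ.filter (InTriangle b)) (p := Drop b)
    rw [Finset.filter_filter, Finset.filter_filter] at f4
    have f5 : (Finset.univ.filter (fun x : V => InTriangle b x ∧ Drop b x)) =
        Finset.univ.filter (Drop b) := by
      ext x
      simp only [Finset.mem_filter, Finset.mem_univ, true_and]
      exact ⟨fun h => h.2, fun h => ⟨h.1, h⟩⟩
    rw [f5] at f4
    have c1 : 3 * m = (Finset.univ.filter (InTriangle b)).card := hm.trans (natcard_filter)
    have c2 : Nat.card {x : V // Drop b x} = (Finset.univ.filter (Drop b)).card :=
      natcard_filter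
    have c3 : Nat.card {x : V // InTriangle b x ∧ ¬ Drop b x} =
        (Finset.univ.filter (fun x : V => InTriangle b x ∧ ¬ Drop b x)).card :=
      natcard_filter
    have c4 := card_tri_le (b := b) (V := V)
    omega
  have hineq : n ≤ k2 + k3 + 2 * m + 1 := by omega
  have hpos : 1 ≤ n := by
    rw [hnn]
    exact Fintype.card_pos
  refine ⟨eA, eB, ?_, ?_⟩
  · rw [Int.even_iff]; omega
  · omega
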